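/- In the Schachermayer example, with U uniform on [0,1], P(V=1|U)=U^2, P(V=-1|U)=1-U^2, F_1 = σ(U), ΔS_2 = V^+ (1+U) - 1: the ratio (E[ΔS_2|F_1])^2 / E[ΔS_2^2|F_1] equals (U^3 + U^2 - 1)^2 / (U^4 - U^2 + 1) almost surely, and its essential supremum equals 1, so the non-degeneracy condition fails. -/

import Mathlib

open MeasureTheory

/-- The σ-algebra generated by `U = Prod.fst` on `Ω = ℝ × ℝ`. -/
def sigmaU : MeasurableSpace (ℝ × ℝ) :=
  MeasurableSpace.comap (Prod.fst : ℝ × ℝ → ℝ) inferInstance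

/-- Schachermayer's example: `Ω = ℝ × ℝ`, `U = fst` uniform on `[0,1]`, `V = snd ∈ {-1,1}`
with `P(V = 1 | U) = U²`, `F₁ = σ(U)`, and `ΔS₂ = V⁺ (1 + U) - 1`. Then
`(E[ΔS₂ | F₁])² / E[ΔS₂² | F₁] = (U³ + U² - 1)² / (U⁴ - U² + 1)` a.s., and the essential
supremum of this ratio equals `1`, so the non-degeneracy condition (a uniform bound by a
constant `C < 1`) fails. -/
theorem stmt_12 (μ : Measure (ℝ × ℝ)) [IsProbabilityMeasure μ]
    (hU : μ.map Prod.fst = volume.restrict (Set.Icc (0 : ℝ) 1))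
    (hV : ∀ᵐ x ∂μ, x.2 = 1 ∨ x.2 = -1)
    (hcond : μ[(fun x : ℝ × ℝ => if x.2 = 1 then (1 : ℝ) else 0) | sigmaU]
      =ᵐ[μ] fun x => x.1 ^ 2)
    (ΔS2 : ℝ × ℝ → ℝ) (hΔS2 : ∀ x, ΔS2 x = max x.2 0 * (1 + x.1) - 1) :
    ((fun x => (μ[ΔS2 | sigmaU]) x ^ 2 / (μ[fun y => ΔS2 y ^ 2 | sigmaU]) x)
        =ᵐ[μ] fun x => (x.1 ^ 3 + x.1 ^ 2 - 1) ^ 2 / (x.1 ^ 4 - x.1 ^ 2 + 1)) ∧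
    essSup (fun x : ℝ × ℝ =>
        ENNReal.ofReal ((x.1 ^ 3 + x.1 ^ 2 - 1) ^ 2 / (x.1 ^ 4 - x.1 ^ 2 + 1))) μ = 1 ∧
    ¬ ∃ C : ℝ, C < 1 ∧ ∀ᵐ x ∂μ,
        (μ[ΔS2 | sigmaU]) x ^ 2 / (μ[fun y => ΔS2 y ^ 2 | sigmaU]) x ≤ C := by
  classical
  -- notation
  set f : ℝ × ℝ → ℝ := fun x => if x.2 = 1 then (1 : ℝ) else 0 with hf_def
  set G : ℝ → ℝ := fun u => (u ^ 3 + u ^ 2 - 1) ^ 2 / (u ^ 4 - u ^ 2 + 1) with hG_def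
  have denom_pos : ∀ u : ℝ, 0 < u ^ 4 - u ^ 2 + 1 := by
    intro u; nlinarith [sq_nonneg (u ^ 2 - 2⁻¹)]
  -- measurability basics
  have hm_le : sigmaU ≤ (inferInstance : MeasurableSpace (ℝ × ℝ)) :=
    measurable_fst.comap_le
  have hmU : Measurable[sigmaU] (Prod.fst : ℝ × ℝ → ℝ) := fun s hs => ⟨s, hs, rfl⟩
  have hf_meas : Measurable f :=
    Measurable.ite (measurable_snd (measurableSet_singleton (1 : ℝ)))
      measurable_const measurable_const
  have hΔ_eq : ΔS2 = fun x => max x.2 0 * (1 + x.1) - 1 := funext hΔS2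
  have hΔ_meas : Measurable ΔS2 := by
    rw [hΔ_eq]
    exact ((measurable_snd.max measurable_const).mul
      (measurable_const.add measurable_fst)).sub measurable_const
  -- a.e. x.1 ∈ [0,1]
  have hU1 : ∀ᵐ x ∂μ, x.1 ∈ Set.Icc (0 : ℝ) 1 := by
    have h : ∀ᵐ u ∂(μ.map Prod.fst), u ∈ Set.Icc (0 : ℝ) 1 := by
      rw [hU]; exact ae_restrict_mem measurableSet_Icc
    exact (ae_map_iff measurable_fst.aemeasurable measurableSet_Icc).mp h
  -- integrability facts
  have hbound : ∀ {g : ℝ × ℝ → ℝ} (c : ℝ), Measurable g → (∀ᵐ x ∂μ, ‖g x‖ ≤ c) →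
      Integrable g μ := fun c hg hb =>
    Integrable.mono' (integrable_const c) hg.aestronglyMeasurable hb
  have hf_abs : ∀ x : ℝ × ℝ, ‖f x‖ ≤ 1 := by
    intro x; by_cases h : x.2 = 1 <;> simp [hf_def, h]
  have hif : Integrable f μ := hbound 1 hf_meas (Filter.Eventually.of_forall hf_abs)
  have hg1f : Integrable ((fun x : ℝ × ℝ => 1 + x.1) * f) μ := by
    refine hbound 2 ((measurable_const.add measurable_fst).mul hf_meas) ?_
    filter_upwards [hU1] with x hx
    have h1 : ‖(1 : ℝ) + x.1‖ ≤ 2 := by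
      rw [Real.norm_eq_abs, abs_le]; constructor <;> nlinarith [hx.1, hx.2]
    rw [Pi.mul_apply, norm_mul]
    calc ‖(1 : ℝ) + x.1‖ * ‖f x‖ ≤ 2 * 1 := mul_le_mul h1 (hf_abs x) (norm_nonneg _) (by norm_num)
      _ = 2 := by norm_num
  have hg2f : Integrable ((fun x : ℝ × ℝ => x.1 ^ 2 - 1) * f) μ := by
    refine hbound 1 (((measurable_fst.pow_const 2).sub measurable_const).mul hf_meas) ?_
    filter_upwards [hU1] with x hx
    have h1 : ‖x.1 ^ 2 - 1‖ ≤ 1 := by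
      rw [Real.norm_eq_abs, abs_le]; constructor <;> nlinarith [hx.1, hx.2]
    rw [Pi.mul_apply, norm_mul]
    calc ‖x.1 ^ 2 - 1‖ * ‖f x‖ ≤ 1 * 1 := mul_le_mul h1 (hf_abs x) (norm_nonneg _) (by norm_num)
      _ ≤ 1 := by norm_num
  have hΔi : Integrable ΔS2 μ := by
    refine hbound 3 hΔ_meas ?_
    filter_upwards [hU1, hV] with x hx hv
    rw [hΔS2, Real.norm_eq_abs, abs_le]
    rcases hv with h | h
    · rw [h, max_eq_left zero_le_one]; constructor <;> nlinarith [hx.1, hx.2]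
    · rw [h, max_eq_right (by norm_num : (-1:ℝ) ≤ 0)]; constructor <;> nlinarith
  have hΔsqi : Integrable (fun y => ΔS2 y ^ 2) μ := by
    refine hbound 9 (hΔ_meas.pow_const 2) ?_
    filter_upwards [hU1, hV] with x hx hv
    rw [hΔS2, Real.norm_eq_abs, abs_le]
    rcases hv with h | h
    · rw [h, max_eq_left zero_le_one]; constructor <;> nlinarith [hx.1, hx.2]
    · rw [h, max_eq_right (by norm_num : (-1:ℝ) ≤ 0)]; constructor <;> nlinarith
  -- strong measurability w.r.t. sigmaU
  have hg1sm : StronglyMeasurable[sigmaU] (fun x : ℝ × ℝ => 1 + x.1) :=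
    (measurable_const.add hmU).stronglyMeasurable
  have hg2sm : StronglyMeasurable[sigmaU] (fun x : ℝ × ℝ => x.1 ^ 2 - 1) :=
    ((hmU.pow_const 2).sub measurable_const).stronglyMeasurable
  -- conditional expectation of ΔS2
  have hA : ΔS2 =ᵐ[μ] ((fun x : ℝ × ℝ => 1 + x.1) * f - fun _ => 1) := by
    filter_upwards [hV] with x hx
    rcases hx with h | h
    · simp only [Pi.sub_apply, Pi.mul_apply, hΔS2, h, hf_def, if_pos]
      rw [max_eq_left zero_le_one]; ring
    · simp only [Pi.sub_apply, Pi.mul_apply, hΔS2, h, hf_def]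
      rw [if_neg (by norm_num), max_eq_right (by norm_num : (-1:ℝ) ≤ 0)]; ring
  have h1 : μ[ΔS2 | sigmaU] =ᵐ[μ] fun x => x.1 ^ 3 + x.1 ^ 2 - 1 := by
    calc μ[ΔS2 | sigmaU]
        =ᵐ[μ] μ[(fun x : ℝ × ℝ => 1 + x.1) * f - fun _ => 1 | sigmaU] := condExp_congr_ae hA
      _ =ᵐ[μ] μ[(fun x : ℝ × ℝ => 1 + x.1) * f | sigmaU] - μ[(fun _ => (1:ℝ)) | sigmaU] :=
          condExp_sub hg1f (integrable_const 1) sigmaU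
      _ =ᵐ[μ] (fun x : ℝ × ℝ => 1 + x.1) * μ[f | sigmaU] - fun _ => 1 := by
          rw [condExp_const hm_le (1 : ℝ)]
          · exact (condExp_mul_of_stronglyMeasurable_left hg1sm hg1f hif).sub Filter.EventuallyEq.rfl
      _ =ᵐ[μ] fun x => x.1 ^ 3 + x.1 ^ 2 - 1 := by
          filter_upwards [hcond] with x hx
          simp only [Pi.sub_apply, Pi.mul_apply, hx]
          ring
  -- conditional expectation of ΔS2 ^ 2
  have hB : (fun y => ΔS2 y ^ 2) =ᵐ[μ] ((fun x : ℝ × ℝ => x.1 ^ 2 - 1) * f + fun _ => 1) := by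
    filter_upwards [hV] with x hx
    rcases hx with h | h
    · simp only [Pi.add_apply, Pi.mul_apply, hΔS2, h, hf_def, if_pos]
      rw [max_eq_left zero_le_one]; ring
    · simp only [Pi.add_apply, Pi.mul_apply, hΔS2, h, hf_def]
      rw [if_neg (by norm_num), max_eq_right (by norm_num : (-1:ℝ) ≤ 0)]; ring
  have h2 : μ[fun y => ΔS2 y ^ 2 | sigmaU] =ᵐ[μ] fun x => x.1 ^ 4 - x.1 ^ 2 + 1 := by
    calc μ[fun y => ΔS2 y ^ 2 | sigmaU]
        =ᵐ[μ] μ[(fun x : ℝ × ℝ => x.1 ^ 2 - 1) * f + fun _ => 1 | sigmaU] := condExp_congr_ae hB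
      _ =ᵐ[μ] μ[(fun x : ℝ × ℝ => x.1 ^ 2 - 1) * f | sigmaU] + μ[(fun _ => (1:ℝ)) | sigmaU] :=
          condExp_add hg2f (integrable_const 1) sigmaU
      _ =ᵐ[μ] (fun x : ℝ × ℝ => x.1 ^ 2 - 1) * μ[f | sigmaU] + fun _ => 1 := by
          rw [condExp_const hm_le (1 : ℝ)]
          · exact (condExp_mul_of_stronglyMeasurable_left hg2sm hg2f hif).add Filter.EventuallyEq.rfl
      _ =ᵐ[μ] fun x => x.1 ^ 4 - x.1 ^ 2 + 1 := by
          filter_upwards [hcond] with x hx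
          simp only [Pi.add_apply, Pi.mul_apply, hx]
          ring
  -- Part 1
  have part1 : (fun x => (μ[ΔS2 | sigmaU]) x ^ 2 / (μ[fun y => ΔS2 y ^ 2 | sigmaU]) x)
      =ᵐ[μ] fun x => (x.1 ^ 3 + x.1 ^ 2 - 1) ^ 2 / (x.1 ^ 4 - x.1 ^ 2 + 1) := by
    filter_upwards [h1, h2] with x e1 e2
    rw [e1, e2]
  -- G ≤ 1 on [0,1]
  have hG_le : ∀ u ∈ Set.Icc (0 : ℝ) 1, G u ≤ 1 := by
    intro u hu
    rw [hG_def, div_le_one (denom_pos u)]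
    nlinarith [mul_nonneg (mul_nonneg (sq_nonneg u) (sub_nonneg.mpr hu.2))
      (pow_nonneg (by linarith [hu.1] : (0:ℝ) ≤ 1 + u) 3)]
  have hG_nonneg : ∀ u : ℝ, 0 ≤ G u := fun u =>
    div_nonneg (sq_nonneg _) (denom_pos u).le
  -- Part 2
  have part2 : essSup (fun x : ℝ × ℝ =>
      ENNReal.ofReal ((x.1 ^ 3 + x.1 ^ 2 - 1) ^ 2 / (x.1 ^ 4 - x.1 ^ 2 + 1))) μ = 1 := by
    refine le_antisymm ?_ ?_
    · refine essSup_le_of_ae_le 1 ?_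
      filter_upwards [hU1] with x hx
      exact ENNReal.ofReal_le_one.mpr (hG_le x.1 hx)
    · by_contra hc
      push_neg at hc
      set s := essSup (fun x : ℝ × ℝ =>
        ENNReal.ofReal ((x.1 ^ 3 + x.1 ^ 2 - 1) ^ 2 / (x.1 ^ 4 - x.1 ^ 2 + 1))) μ with hs_def
      have hs_top : s ≠ ⊤ := (hc.trans ENNReal.one_lt_top).ne
      have ht1 : s.toReal < 1 := by
        have := ENNReal.toReal_lt_toReal hs_top (ENNReal.one_ne_top) |>.mpr hc
        simpa using this
      have hae : ∀ᵐ x ∂μ, G x.1 ≤ s.toReal := by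
        filter_upwards [ae_le_essSup (μ := μ) (f := fun x : ℝ × ℝ =>
          ENNReal.ofReal ((x.1 ^ 3 + x.1 ^ 2 - 1) ^ 2 / (x.1 ^ 4 - x.1 ^ 2 + 1)))] with x hx
        exact (ENNReal.ofReal_le_iff_le_toReal hs_top).mp hx
      -- continuity of G at 0 with G 0 = 1
      have hG_cont : Continuous G := by
        rw [hG_def]
        exact (((continuous_pow 3).add (continuous_pow 2)).sub continuous_const |>.pow 2).div
          (((continuous_pow 4).sub (continuous_pow 2)).add continuous_const)
          (fun u => (denom_pos u).ne')
      have hG0 : G 0 = 1 := by rw [hG_def]; norm_num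
      have hev : ∀ᶠ u in nhds (0 : ℝ), s.toReal < G u :=
        hG_cont.continuousAt.eventually (eventually_gt_nhds (hG0 ▸ ht1))
      obtain ⟨ε, hε, hball⟩ := Metric.eventually_nhds_iff.mp hev
      set δ : ℝ := min (ε / 2) 1 with hδ_def
      have hδ_pos : 0 < δ := lt_min (by linarith) one_pos
      have hδ1 : δ ≤ 1 := min_le_right _ _
      have hsub : ∀ u ∈ Set.Icc (0 : ℝ) δ, s.toReal < G u := by
        intro u hu
        apply hball
        rw [Real.dist_eq, sub_zero, abs_of_nonneg hu.1]
        calc u ≤ δ := hu.2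
          _ ≤ ε / 2 := min_le_left _ _
          _ < ε := by linarith
      have hzero : μ {x : ℝ × ℝ | s.toReal < G x.1} = 0 := by
        have := ae_iff.mp hae
        simpa [not_le] using this
      have hpos : 0 < μ (Prod.fst ⁻¹' Set.Icc (0 : ℝ) δ) := by
        rw [← Measure.map_apply measurable_fst measurableSet_Icc, hU,
          Measure.restrict_apply measurableSet_Icc,
          Set.inter_eq_left.mpr (Set.Icc_subset_Icc le_rfl hδ1), Real.volume_Icc]
        simpa using ENNReal.ofReal_pos.mpr hδ_pos
      have hmono : μ (Prod.fst ⁻¹' Set.Icc (0 : ℝ) δ) ≤ μ {x : ℝ × ℝ | s.toReal < G x.1} :=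
        measure_mono fun x hx => hsub x.1 hx
      rw [hzero] at hmono
      exact absurd (hpos.trans_le hmono) (lt_irrefl 0)
  refine ⟨part1, part2, ?_⟩
  rintro ⟨C, hC, hCa⟩
  have hGC : ∀ᵐ x ∂μ, G x.1 ≤ C := by
    filter_upwards [part1, hCa] with x e h
    rw [e] at h
    exact h
  have hle : essSup (fun x : ℝ × ℝ =>
      ENNReal.ofReal ((x.1 ^ 3 + x.1 ^ 2 - 1) ^ 2 / (x.1 ^ 4 - x.1 ^ 2 + 1))) μ
      ≤ ENNReal.ofReal C := by
    refine essSup_le_of_ae_le _ ?_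
    filter_upwards [hGC] with x hx
    exact ENNReal.ofReal_le_ofReal hx
  rw [part2] at hle
  exact absurd (hle.trans_lt (ENNReal.ofReal_lt_one.mpr hC)) (lt_irrefl 1)
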